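/- The formula R_Ann p is not semantically equivalent to any formula of the language Φ that does not use the modality R; that is, for every formula φ built only from the propositional variable p, negation, disjunction, and the modalities @_n and D_n, there exists an epistemic model with extensions in which the truth set of R_Ann p differs from the truth set of φ. -/
import Mathlib


/-- Formulas of the language Φ: φ ::= p | ¬φ | φ∨φ | @ₙφ | Rₙφ | Dₙφ,
where `P` is the type of propositional variables and `N` the type of names. -/
inductive Formula (P N : Type) : Type
  | var : P → Formula P N
  | neg : Formula P N → Formula P N
  | disj : Formula P N → Formula P N → Formula P N
  | at_ : N → Formula P N → Formula P N
  | re : N → Formula P N → Formula P N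
  | de : N → Formula P N → Formula P N

/-- An epistemic model with extensions. -/
structure Model (P N : Type) where
  W : Type
  A : Type
  sim : A → W → W → Prop
  sim_equiv : ∀ a, Equivalence (sim a)
  ext : W → N → A
  val : P → Set (W × A)

/-- The satisfaction relation `w, a ⊨ φ`. -/
def Model.sat {P N : Type} (M : Model P N) : Formula P N → M.W → M.A → Prop
  | .var p, w, a => (w, a) ∈ M.val p
  | .neg φ, w, a => ¬ M.sat φ w a
  | .disj φ ψ, w, a => M.sat φ w a ∨ M.sat ψ w a
  | .at_ n φ, w, _ => M.sat φ w (M.ext w n)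
  | .re n φ, w, a => ∀ u, M.sim a w u → M.sat φ u (M.ext w n)
  | .de n φ, w, a => ∀ u, M.sim a w u → M.sat φ u (M.ext u n)

/-- The truth set ⟦φ⟧ of a formula. -/
def Model.truthSet {P N : Type} (M : Model P N) (φ : Formula P N) : Set (M.W × M.A) :=
  {x | M.sat φ x.1 x.2}

/-- A formula does not use the modality R. -/
def Formula.noRe {P N : Type} : Formula P N → Prop
  | .var _ => True
  | .neg φ => φ.noRe
  | .disj φ ψ => φ.noRe ∧ ψ.noRe
  | .at_ _ φ => φ.noRe
  | .re _ _ => False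
  | .de _ φ => φ.noRe

/-- The countermodel: worlds = agents = Bool, everything indistinguishable,
`ext w = w`, and `p` true everywhere except at `(true, false)`. -/
def CM : Model Unit Unit where
  W := Bool
  A := Bool
  sim := fun _ _ _ => True
  sim_equiv := fun _ => ⟨fun _ => trivial, fun _ => trivial, fun _ _ => trivial⟩
  ext := fun w _ => w
  val := fun _ => {x | x ≠ (true, false)}

/-- All R-free formulas have the same truth value at all points other than
`(true, false)`. -/
lemma cm_invariant (φ : Formula Unit Unit) (h : φ.noRe) :
    ∀ w a w' a', (w, a) ≠ (true, false) → (w', a') ≠ (true, false) →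
      (CM.sat φ w a ↔ CM.sat φ w' a') := by
  induction φ with
  | var p =>
    intro w a w' a' hx hy
    simp only [Model.sat, CM, Set.mem_setOf_eq]
    exact ⟨fun _ => hy, fun _ => hx⟩
  | neg ψ ih =>
    intro w a w' a' hx hy
    simp only [Model.sat]
    exact not_congr (ih h w a w' a' hx hy)
  | disj ψ χ ih1 ih2 =>
    intro w a w' a' hx hy
    simp only [Model.sat]
    exact or_congr (ih1 h.1 w a w' a' hx hy) (ih2 h.2 w a w' a' hx hy)
  | at_ n ψ ih =>
    intro w a w' a' _ _
    simp only [Model.sat]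
    have hx : ((w : Bool), CM.ext w n) ≠ (true, false) := by
      show (w, w) ≠ (true, false)
      intro hc
      have h1 : w = true := (Prod.mk.injEq _ _ _ _ ▸ hc).1
      have h2 : w = false := (Prod.mk.injEq _ _ _ _ ▸ hc).2
      simp [h1] at h2
    have hy : ((w' : Bool), CM.ext w' n) ≠ (true, false) := by
      show (w', w') ≠ (true, false)
      intro hc
      have h1 : w' = true := (Prod.mk.injEq _ _ _ _ ▸ hc).1
      have h2 : w' = false := (Prod.mk.injEq _ _ _ _ ▸ hc).2
      simp [h1] at h2
    exact ih h w (CM.ext w n) w' (CM.ext w' n) hx hy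
  | re n ψ ih => exact absurd h (by simp [Formula.noRe])
  | de n ψ ih =>
    intro w a w' a' _ _
    simp only [Model.sat]
    constructor
    · intro H u _
      exact H u trivial
    · intro H u _
      exact H u trivial

/-- R_Ann p is not semantically equivalent to any formula that
does not use the modality R: for every such formula φ there is an epistemic
model with extensions in which ⟦R_Ann p⟧ ≠ ⟦φ⟧. -/
theorem re_undefinable_via_de_at (φ : Formula Unit Unit) (h : φ.noRe) :
    ∃ M : Model Unit Unit, M.truthSet (.re () (.var ())) ≠ M.truthSet φ := by
  refine ⟨CM, fun heq => ?_⟩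
  have hR_tt : CM.sat (.re () (.var ())) true true := by
    intro u _
    show ((u : Bool), (true : Bool)) ∈ CM.val ()
    simp only [CM, Set.mem_setOf_eq]
    intro hc
    have h2 : (true : Bool) = false := (Prod.mk.injEq _ _ _ _ ▸ hc).2
    simp at h2
  have hR_ff : ¬ CM.sat (.re () (.var ())) false false := by
    intro H
    have := H true trivial
    simp only [Model.sat, CM, Set.mem_setOf_eq] at this
    exact this rfl
  have hφ_tt : CM.sat φ true true := by
    have : ((true : Bool), (true : Bool)) ∈ CM.truthSet (.re () (.var ())) := hR_tt
    rw [heq] at this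
    exact this
  have hφ_ff : ¬ CM.sat φ false false := by
    intro H
    have : ((false : Bool), (false : Bool)) ∈ CM.truthSet φ := H
    rw [← heq] at this
    exact hR_ff this
  exact hφ_ff ((cm_invariant φ h true true false false (by simp) (by simp)).mp hφ_tt)
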